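/- Let s, d, t be positive integers with s > dt, let F be a field, and let C ⊆ F^n be a linear code of dimension ℓ satisfying ℓ·s = n·(s − dt). Let L : [n] → [s] be a labeling (a surjective function) such that every nonzero codeword of C has labelweight at least dt + 1. Then all fibers of L have the same cardinality: |L⁻¹(λ)| = |L⁻¹(λ')| for all λ, λ' ∈ [s]. -/

import Mathlib

open Classical in
/-- The labelweight of a vector `c` with respect to a labeling `L`: the number of
distinct labels appearing on the support of `c`. -/
noncomputable def labelWeight {ι F : Type*} [Fintype ι] {s : ℕ} [Zero F]
    (L : ι → Fin s) (c : ι → F) : ℕ :=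
  ((Finset.univ.filter fun i => c i ≠ 0).image L).card

/-- Let s, d, t be positive integers with s > dt, F a field, and C ⊆ F^n a
linear code of dimension ℓ with ℓ·s = n·(s − dt).  If L : [n] → [s] is a surjective
labeling such that every nonzero codeword of C has labelweight at least dt + 1, then
all fibers of L have the same cardinality. -/
theorem stmt_2 {F : Type*} [Field F] {n s d t ℓ : ℕ}
    (hs : 0 < s) (hd : 0 < d) (ht : 0 < t) (hst : d * t < s)
    (C : Submodule F (Fin n → F)) (hdim : Module.finrank F C = ℓ)
    (hrate : ℓ * s = n * (s - d * t))
    (L : Fin n → Fin s) (hL : Function.Surjective L)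
    (hwt : ∀ c ∈ C, c ≠ 0 → d * t + 1 ≤ labelWeight L c) :
    ∀ lam lam' : Fin s,
      (Finset.univ.filter fun i => L i = lam).card
        = (Finset.univ.filter fun i => L i = lam').card := by
  classical
  intro lam lam'
  set k := d * t with hkdef
  have hk0 : 0 < k := Nat.mul_pos hd ht
  obtain ⟨k', hk'⟩ : ∃ k', k = k' + 1 := ⟨k - 1, by omega⟩
  obtain ⟨s', hs'⟩ : ∃ s', s = s' + 1 := ⟨s - 1, by omega⟩
  set f : Fin s → ℕ := fun a => (Finset.univ.filter fun i => L i = a).card with hf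
  -- total size
  have hsumf : ∑ a : Fin s, f a = n := by
    have h := Finset.card_eq_sum_card_fiberwise
      (f := L) (s := (Finset.univ : Finset (Fin n))) (t := (Finset.univ : Finset (Fin s)))
      (fun x _ => Finset.mem_univ _)
    simpa [hf] using h.symm
  -- shortening bound
  have hB : ∀ S : Finset (Fin s), S.card = k → ℓ + ∑ a ∈ S, f a ≤ n := by
    intro S hScard
    set T : Finset (Fin n) := Finset.univ.filter (fun i => L i ∈ S) with hT
    have hTsum : T.card = ∑ a ∈ S, f a := by
      refine (Finset.card_eq_sum_card_fiberwise (f := L) (s := T) (t := S) ?_).trans ?_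
      · intro x hx
        simp only [hT, Finset.mem_coe, Finset.mem_filter] at hx
        exact hx.2
      · refine Finset.sum_congr rfl fun a ha => ?_
        congr 1
        ext i
        simp only [hT, Finset.mem_filter, Finset.mem_univ, true_and]
        constructor
        · exact fun h => h.2
        · intro h; exact ⟨h ▸ ha, h⟩
    have hinj0 : ∀ c ∈ C, (∀ i : Fin n, i ∉ T → c i = 0) → c = 0 := by
      intro c hc h0
      by_contra hne
      have h1 := hwt c hc hne
      have h2 : labelWeight L c ≤ S.card := by
        unfold labelWeight
        apply Finset.card_le_card
        intro a ha
        simp only [Finset.mem_image, Finset.mem_filter, Finset.mem_univ, true_and] at ha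
        obtain ⟨i, hi, rfl⟩ := ha
        have hiT : i ∈ T := by
          by_contra h
          exact hi (h0 i h)
        simp only [hT, Finset.mem_filter, Finset.mem_univ, true_and] at hiT
        exact hiT
      omega
    let φ : C →ₗ[F] ({ i : Fin n // i ∉ T } → F) :=
      { toFun := fun c j => (c : Fin n → F) j.1
        map_add' := fun a b => rfl
        map_smul' := fun m a => rfl }
    have hφinj : Function.Injective φ := by
      rw [injective_iff_map_eq_zero]
      intro c hc0
      have hz : (c : Fin n → F) = 0 := by
        apply hinj0 _ c.2
        intro i hiT
        have := congrFun hc0 ⟨i, hiT⟩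
        simpa [φ] using this
      exact Subtype.ext hz
    have hdimle : ℓ ≤ Fintype.card { i : Fin n // i ∉ T } := by
      rw [← hdim, ← Module.finrank_fintype_fun_eq_card F]
      exact LinearMap.finrank_le_finrank_of_injective hφinj
    have hcardsub : Fintype.card { i : Fin n // i ∉ T } = n - T.card := by
      rw [Fintype.card_subtype_compl]
      simp
    have hTle : T.card ≤ n := by
      have := Finset.card_le_univ T
      simpa using this
    omega
  -- arithmetic identity
  have hks : k ≤ s := hst.le
  have hmain : ℓ * s + n * k = n * s := by
    zify [hks] at hrate
    zify
    linarith
  -- double counting over all k-subsets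
  set P := Finset.powersetCard k (Finset.univ : Finset (Fin s)) with hP
  have hPcard : P.card = s.choose k := by
    simp [hP, Finset.card_powersetCard]
  have hnotmem : ∀ a : Fin s, P.filter (fun S => a ∉ S)
      = Finset.powersetCard k ((Finset.univ : Finset (Fin s)).erase a) := by
    intro a
    ext S
    simp only [hP, Finset.mem_filter, Finset.mem_powersetCard, Finset.subset_erase]
    tauto
  have hcount : ∀ a : Fin s, (P.filter (fun S => a ∈ S)).card = (s - 1).choose (k - 1) := by
    intro a
    have h1 : (P.filter (fun S => a ∈ S)).card + (P.filter (fun S => a ∉ S)).card = P.card :=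
      Finset.card_filter_add_card_filter_not _
    have h2 : (P.filter (fun S => a ∉ S)).card = (s - 1).choose k := by
      rw [hnotmem a, Finset.card_powersetCard]
      simp [Finset.card_erase_of_mem]
    have h3 : (s - 1).choose (k - 1) + (s - 1).choose k = s.choose k := by
      rw [hs', hk']
      simpa using (Nat.choose_succ_succ s' k').symm
    omega
  have hswap : ∑ S ∈ P, ∑ a ∈ S, f a = n * (s - 1).choose (k - 1) := by
    calc ∑ S ∈ P, ∑ a ∈ S, f a
        = ∑ S ∈ P, ∑ a : Fin s, if a ∈ S then f a else 0 := by
          refine Finset.sum_congr rfl fun S hS => ?_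
          rw [Finset.sum_ite_mem, Finset.univ_inter]
      _ = ∑ a : Fin s, ∑ S ∈ P, if a ∈ S then f a else 0 := Finset.sum_comm
      _ = ∑ a : Fin s, f a * (s - 1).choose (k - 1) := by
          refine Finset.sum_congr rfl fun a _ => ?_
          rw [← Finset.sum_filter, Finset.sum_const, hcount a, smul_eq_mul, mul_comm]
      _ = n * (s - 1).choose (k - 1) := by rw [← Finset.sum_mul, hsumf]
  have hchoose : s * ((s - 1).choose (k - 1)) = s.choose k * k := by
    rw [hs', hk']
    simpa using Nat.add_one_mul_choose_eq s' k'
  have key : s.choose k * ℓ + n * (s - 1).choose (k - 1) = s.choose k * n := by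
    apply Nat.eq_of_mul_eq_mul_left hs
    calc s * (s.choose k * ℓ + n * (s - 1).choose (k - 1))
        = (ℓ * s) * s.choose k + n * (s * ((s - 1).choose (k - 1))) := by ring
      _ = (ℓ * s) * s.choose k + n * (s.choose k * k) := by rw [hchoose]
      _ = (ℓ * s + n * k) * s.choose k := by ring
      _ = (n * s) * s.choose k := by rw [hmain]
      _ = s * (s.choose k * n) := by ring
  have hle : ∀ S ∈ P, ℓ + ∑ a ∈ S, f a ≤ n := fun S hS =>
    hB S (Finset.mem_powersetCard.mp hS).2
  have htot : ∑ S ∈ P, (ℓ + ∑ a ∈ S, f a) = ∑ S ∈ P, n := by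
    rw [Finset.sum_add_distrib, hswap, Finset.sum_const, Finset.sum_const, hPcard,
      smul_eq_mul, smul_eq_mul, key]
  have hEq : ∀ S ∈ P, ℓ + ∑ a ∈ S, f a = n :=
    (Finset.sum_eq_sum_iff_of_le hle).mp htot
  -- exchange argument
  by_cases heq : lam = lam'
  · rw [heq]
  · have hcardc : k - 1 ≤ (({lam, lam'}ᶜ : Finset (Fin s))).card := by
      rw [Finset.card_compl, Finset.card_pair heq]
      simp only [Fintype.card_fin]
      omega
    obtain ⟨A, hA, hAcard⟩ := Finset.exists_subset_card_eq hcardc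
    have hlamA : lam ∉ A := by
      intro h
      have := hA h
      simp at this
    have hlam'A : lam' ∉ A := by
      intro h
      have := hA h
      simp at this
    have hS1 : insert lam A ∈ P := by
      rw [hP, Finset.mem_powersetCard]
      refine ⟨Finset.subset_univ _, ?_⟩
      rw [Finset.card_insert_of_notMem hlamA, hAcard]
      omega
    have hS2 : insert lam' A ∈ P := by
      rw [hP, Finset.mem_powersetCard]
      refine ⟨Finset.subset_univ _, ?_⟩
      rw [Finset.card_insert_of_notMem hlam'A, hAcard]
      omega
    have e1 := hEq _ hS1
    have e2 := hEq _ hS2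
    rw [Finset.sum_insert hlamA] at e1
    rw [Finset.sum_insert hlam'A] at e2
    have : f lam = f lam' := by omega
    exact this
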